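/- Let x be a billiard solution of the one-dimensional impulsive Cauchy problem with initial velocity v. Then for every t ∈ [0,T] that is not an impact time one has |x'(t)| ≥ |v| − ∫₀ᵀ m(s) ds. In particular, if |v| > ∫₀ᵀ m(s) ds, then |x'(t)| ≥ d for the positive constant d := |v| − ∫₀ᵀ m(s) ds at every non-impact time t. -/

import Mathlib

open Set MeasureTheory Filter Topology

/-- The set of impact times of a trajectory `x` on the time interval `(0, T]`
in the one-dimensional billiard table `K = [-a, a]`. -/
def impactSet (T a : ℝ) (x : ℝ → ℝ) : Set ℝ :=
  {t | t ∈ Set.Ioc 0 T ∧ |x t| = a}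

/-- A billiard solution of the one-dimensional impulsive Cauchy problem
`x'' = f(t, x)` in `K = [-a, a]`, `x(0) = 0`, with initial velocity `v` and the
elastic reflection law `x'(s+) = -x'(s-)` at impact times `s < T`.

The function `xd` plays the role of the derivative of `x` away from the (finitely
many) impact times; on each connected component of `[0, T]` minus the impact set it
is absolutely continuous with `xd' = f(t, x(t))` a.e., which is expressed by the
integral identity `accel`.  One-sided limits of `xd` at impact times exist
(`leftLimExists`, and `reflect` then yields the right limits), and the reflection
law is `reflect`. -/
structure BilliardSol (T a : ℝ) (f : ℝ → ℝ → ℝ) (v : ℝ) where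
  x : ℝ → ℝ
  xd : ℝ → ℝ
  cont : ContinuousOn x (Set.Icc 0 T)
  init : x 0 = 0
  confined : ∀ t ∈ Set.Icc 0 T, |x t| ≤ a
  finImpacts : (impactSet T a x).Finite
  hasDeriv : ∀ t ∈ Set.Icc 0 T \ impactSet T a x,
      HasDerivWithinAt x (xd t) (Set.Icc 0 T) t
  initVel : xd 0 = v
  accel : ∀ s u : ℝ, s ∈ Set.Icc 0 T → u ∈ Set.Icc 0 T → s ≤ u →
      (∀ τ ∈ Set.Icc s u, τ ∉ impactSet T a x) →
      xd u = xd s + ∫ τ in s..u, f τ (x τ)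
  leftLimExists : ∀ s ∈ impactSet T a x,
      ∃ L : ℝ, Filter.Tendsto xd (nhdsWithin s (Set.Iio s \ impactSet T a x)) (nhds L)
  reflect : ∀ s ∈ impactSet T a x, s < T → ∀ L : ℝ,
      Filter.Tendsto xd (nhdsWithin s (Set.Iio s \ impactSet T a x)) (nhds L) →
      Filter.Tendsto xd (nhdsWithin s (Set.Ioi s \ impactSet T a x)) (nhds (-L))

theorem velocity_lower_bound_key
    (T a : ℝ) (hT : 0 < T)
    (f : ℝ → ℝ → ℝ) (m : ℝ → ℝ)
    (hm_int : IntervalIntegrable m volume 0 T)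
    (hm_nonneg : ∀ t ∈ Set.Icc 0 T, 0 ≤ m t)
    (hf_bound : ∀ t ∈ Set.Icc 0 T, ∀ y : ℝ, |f t y| ≤ m t)
    (v : ℝ) (X : BilliardSol T a f v) :
    ∀ n : ℕ, ∀ t : ℝ, t ∈ Set.Icc 0 T → t ∉ impactSet T a X.x →
      (impactSet T a X.x ∩ Set.Iio t).ncard ≤ n →
      |v| - (∫ s in (0:ℝ)..t, m s) ≤ |X.xd t| := by
  set E := impactSet T a X.x with hEdef
  have hEfin : E.Finite := X.finImpacts
  have hmint : ∀ c d : ℝ, c ∈ Set.Icc 0 T → d ∈ Set.Icc 0 T →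
      IntervalIntegrable m volume c d := by
    intro c d hc hd
    refine hm_int.mono_set (Set.uIcc_subset_uIcc ?_ ?_) <;>
      rw [Set.uIcc_of_le hT.le] <;> assumption
  have hInn : ∀ c d : ℝ, c ∈ Set.Icc 0 T → d ∈ Set.Icc 0 T → c ≤ d →
      0 ≤ ∫ s in c..d, m s := by
    intro c d hc hd hcd
    exact intervalIntegral.integral_nonneg hcd fun u hu =>
      hm_nonneg u ⟨hc.1.trans hu.1, hu.2.trans hd.2⟩
  have hadd : ∀ c d e : ℝ, c ∈ Set.Icc 0 T → d ∈ Set.Icc 0 T → e ∈ Set.Icc 0 T →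
      (∫ s in c..d, m s) + (∫ s in d..e, m s) = ∫ s in c..e, m s := fun c d e hc hd he =>
    intervalIntegral.integral_add_adjacent_intervals (hmint c d hc hd) (hmint d e hd he)
  have hfbd : ∀ c d : ℝ, c ∈ Set.Icc 0 T → d ∈ Set.Icc 0 T → c ≤ d →
      |∫ τ in c..d, f τ (X.x τ)| ≤ ∫ τ in c..d, m τ := by
    intro c d hc hd hcd
    have h1 : ‖∫ τ in c..d, f τ (X.x τ)‖ ≤ |∫ τ in c..d, m τ| := by
      refine intervalIntegral.norm_integral_le_abs_of_norm_le ?_ (hmint c d hc hd)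
      refine ae_restrict_of_forall_mem measurableSet_uIoc fun τ hτ => ?_
      rw [Set.uIoc_of_le hcd] at hτ
      rw [Real.norm_eq_abs]
      exact hf_bound τ ⟨hc.1.trans hτ.1.le, hτ.2.trans hd.2⟩ _
    rwa [Real.norm_eq_abs, abs_of_nonneg (hInn c d hc hd hcd)] at h1
  -- the no-impact argument
  have base : ∀ t : ℝ, t ∈ Set.Icc 0 T → (∀ τ ∈ Set.Icc 0 t, τ ∉ E) →
      |v| - (∫ s in (0:ℝ)..t, m s) ≤ |X.xd t| := by
    intro t ht hno
    have hacc := X.accel 0 t ⟨le_refl 0, hT.le⟩ ht ht.1 hno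
    rw [X.initVel] at hacc
    have h1 : |v| ≤ |X.xd t| + |∫ τ in (0:ℝ)..t, f τ (X.x τ)| := by
      have hv : v = X.xd t - ∫ τ in (0:ℝ)..t, f τ (X.x τ) := by linarith
      have h0 := congrArg abs hv
      rw [h0]
      exact abs_sub _ _
    have h2 := hfbd 0 t ⟨le_refl 0, hT.le⟩ ht ht.1
    linarith
  intro n
  induction n with
  | zero =>
    intro t ht htE hcard
    refine base t ht fun τ hτ hτE => ?_
    rcases eq_or_lt_of_le hτ.2 with rfl | hlt
    · exact htE hτE
    · have hA : (E ∩ Set.Iio t) = ∅ :=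
        (Set.ncard_eq_zero (hEfin.inter_of_left _)).mp (Nat.le_zero.mp hcard)
      have hmem : τ ∈ E ∩ Set.Iio t := ⟨hτE, hlt⟩
      rw [hA] at hmem
      exact hmem
  | succ n IH =>
    intro t ht htE hcard
    have hAfin : (E ∩ Set.Iio t).Finite := hEfin.inter_of_left _
    rcases (E ∩ Set.Iio t).eq_empty_or_nonempty with hA | hA
    · refine base t ht fun τ hτ hτE => ?_
      rcases eq_or_lt_of_le hτ.2 with rfl | hlt
      · exact htE hτE
      · have hmem : τ ∈ E ∩ Set.Iio t := ⟨hτE, hlt⟩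
        rw [hA] at hmem
        exact hmem
    · obtain ⟨s, hsA, hsmax⟩ := Set.exists_max_image (E ∩ Set.Iio t) id hAfin hA
      have hsE : s ∈ E := hsA.1
      have hst : s < t := hsA.2
      have hs0 : 0 < s := hsE.1.1
      have hsT : s ≤ T := hsE.1.2
      have hsIcc : s ∈ Set.Icc 0 T := ⟨hs0.le, hsT⟩
      have hsltT : s < T := lt_of_lt_of_le hst ht.2
      obtain ⟨L, hL⟩ := X.leftLimExists s hsE
      have hR := X.reflect s hsE hsltT L hL
      -- filters at s with E removed equal plain one-sided filters
      have hfilt : ∀ U : Set ℝ, s ∉ U → 𝓝[U \ E] s = 𝓝[U] s := by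
        intro U hsU
        have hcl : IsClosed (E \ {s}) := (hEfin.subset Set.diff_subset).isClosed
        have hcompl : (E \ {s})ᶜ ∈ 𝓝 s :=
          hcl.isOpen_compl.mem_nhds (by simp)
        have hUE : U \ E = U ∩ (E \ {s})ᶜ := by
          ext τ
          simp only [Set.mem_diff, Set.mem_inter_iff, Set.mem_compl_iff,
            Set.mem_singleton_iff]
          constructor
          · rintro ⟨h1, h2⟩; exact ⟨h1, fun hc => h2 hc.1⟩
          · rintro ⟨h1, h2⟩
            refine ⟨h1, fun hc => h2 ⟨hc, ?_⟩⟩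
            rintro rfl; exact hsU h1
        rw [hUE, nhdsWithin_inter_of_mem' (nhdsWithin_le_nhds hcompl)]
      have hF1 : 𝓝[Set.Iio s \ E] s = 𝓝[Set.Iio s] s := hfilt _ (lt_irrefl s)
      have hF2 : 𝓝[Set.Ioi s \ E] s = 𝓝[Set.Ioi s] s := hfilt _ (lt_irrefl s)
      haveI hne1 : (𝓝[Set.Iio s \ E] s).NeBot := by rw [hF1]; infer_instance
      haveI hne2 : (𝓝[Set.Ioi s \ E] s).NeBot := by rw [hF2]; infer_instance
      -- Step 1: lower bound for |L|
      have hstep1 : |v| - (∫ u in (0:ℝ)..s, m u) ≤ |L| := by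
        refine ge_of_tendsto hL.abs ?_
        have hpos : ∀ᶠ τ in 𝓝[Set.Iio s \ E] s, 0 < τ :=
          (eventually_gt_nhds hs0).filter_mono nhdsWithin_le_nhds
        filter_upwards [self_mem_nhdsWithin, hpos] with τ hτmem hτ0
        obtain ⟨hτs, hτE⟩ := hτmem
        have hτs' : τ < s := hτs
        have hτIcc : τ ∈ Set.Icc 0 T := ⟨hτ0.le, hτs'.le.trans hsT⟩
        have hsub : E ∩ Set.Iio τ ⊆ (E ∩ Set.Iio t) \ {s} := by
          rintro σ ⟨hσE, hστ⟩
          have hσs : σ < s := lt_trans hστ hτs'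
          exact ⟨⟨hσE, lt_trans hσs hst⟩, fun h => absurd (h ▸ hσs) (lt_irrefl s)⟩
        have hcardτ : (E ∩ Set.Iio τ).ncard ≤ n := by
          have h1 : (E ∩ Set.Iio τ).ncard ≤ ((E ∩ Set.Iio t) \ {s}).ncard :=
            Set.ncard_le_ncard hsub (hAfin.subset Set.diff_subset)
          have h2 : ((E ∩ Set.Iio t) \ {s}).ncard + 1 = (E ∩ Set.Iio t).ncard :=
            Set.ncard_diff_singleton_add_one hsA hAfin
          omega
        have hIH := IH τ hτIcc hτE hcardτ
        have hmonole : (∫ u in (0:ℝ)..τ, m u) ≤ ∫ u in (0:ℝ)..s, m u := by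
          have := hadd 0 τ s ⟨le_refl 0, hT.le⟩ hτIcc hsIcc
          have hnn := hInn τ s hτIcc hsIcc hτs'.le
          linarith
        linarith
      -- Step 2: upper bound for |L|
      have hstep2 : |L| ≤ |X.xd t| + ∫ u in s..t, m u := by
        have habs : Filter.Tendsto (fun τ => |X.xd τ|) (𝓝[Set.Ioi s \ E] s) (𝓝 |L|) := by
          have := hR.abs
          rwa [abs_neg] at this
        refine le_of_tendsto habs ?_
        have hltt : ∀ᶠ τ in 𝓝[Set.Ioi s \ E] s, τ < t :=
          (eventually_lt_nhds hst).filter_mono nhdsWithin_le_nhds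
        filter_upwards [self_mem_nhdsWithin, hltt] with τ hτmem hτt
        obtain ⟨hτs, hτE⟩ := hτmem
        have hsτ : s < τ := hτs
        have hτIcc : τ ∈ Set.Icc 0 T := ⟨(hs0.trans hsτ).le, hτt.le.trans ht.2⟩
        have hno : ∀ σ ∈ Set.Icc τ t, σ ∉ E := by
          intro σ hσ hσE
          rcases eq_or_lt_of_le hσ.2 with rfl | hlt
          · exact htE hσE
          · have hσA : σ ∈ E ∩ Set.Iio t := ⟨hσE, hlt⟩
            have : σ ≤ s := by simpa using hsmax σ hσA
            exact absurd (lt_of_lt_of_le (lt_of_lt_of_le hsτ hσ.1) this) (lt_irrefl s)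
        have hacc := X.accel τ t hτIcc ht hτt.le hno
        have h1 : |X.xd τ| ≤ |X.xd t| + |∫ u in τ..t, f u (X.x u)| := by
          have hv : X.xd τ = X.xd t - ∫ u in τ..t, f u (X.x u) := by linarith
          have h0 := congrArg abs hv
          rw [h0]
          exact abs_sub _ _
        have h2 := hfbd τ t hτIcc ht hτt.le
        have h3 : (∫ u in τ..t, m u) ≤ ∫ u in s..t, m u := by
          have := hadd s τ t hsIcc hτIcc ht
          have hnn := hInn s τ hsIcc hτIcc hsτ.le
          linarith
        linarith
      have hsplit := hadd 0 s t ⟨le_refl 0, hT.le⟩ hsIcc ht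
      linarith

/-- for a billiard solution with initial velocity `v`, at every
non-impact time `t ∈ [0, T]` the velocity satisfies `|x'(t)| ≥ |v| - ∫₀ᵀ m`;
in particular, if `|v| > ∫₀ᵀ m` then `|x'(t)| ≥ d := |v| - ∫₀ᵀ m > 0`. -/
theorem velocity_lower_bound
    (T a : ℝ) (hT : 0 < T) (ha : 0 < a)
    (f : ℝ → ℝ → ℝ) (m : ℝ → ℝ)
    -- (H1): `f` is a Carathéodory function, integrably bounded by `m`
    (hf_meas : ∀ y : ℝ, Measurable fun t => f t y)
    (hf_cont : ∀ᵐ t ∂(volume : Measure ℝ), t ∈ Set.Icc 0 T → Continuous fun y => f t y)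
    (hm_int : IntervalIntegrable m volume 0 T)
    (hm_nonneg : ∀ t ∈ Set.Icc 0 T, 0 ≤ m t)
    (hf_bound : ∀ t ∈ Set.Icc 0 T, ∀ y : ℝ, |f t y| ≤ m t)
    (v : ℝ) (X : BilliardSol T a f v) :
    (∀ t ∈ Set.Icc 0 T \ impactSet T a X.x,
        |v| - (∫ s in (0:ℝ)..T, m s) ≤ |X.xd t|) ∧
      ((∫ s in (0:ℝ)..T, m s) < |v| →
        0 < |v| - (∫ s in (0:ℝ)..T, m s) ∧
          ∀ t ∈ Set.Icc 0 T \ impactSet T a X.x,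
            |v| - (∫ s in (0:ℝ)..T, m s) ≤ |X.xd t|) := by

  have key := velocity_lower_bound_key T a hT f m hm_int hm_nonneg hf_bound v X
  have main : ∀ t ∈ Set.Icc 0 T \ impactSet T a X.x,
      |v| - (∫ s in (0:ℝ)..T, m s) ≤ |X.xd t| := by
    rintro t ⟨ht, htE⟩
    have h := key (impactSet T a X.x ∩ Set.Iio t).ncard t ht htE le_rfl
    have hint1 : IntervalIntegrable m volume 0 t :=
      hm_int.mono_set (Set.uIcc_subset_uIcc (by rw [Set.uIcc_of_le hT.le]; exact ⟨le_refl 0, hT.le⟩)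
        (by rw [Set.uIcc_of_le hT.le]; exact ht))
    have hint2 : IntervalIntegrable m volume t T :=
      hm_int.mono_set (Set.uIcc_subset_uIcc (by rw [Set.uIcc_of_le hT.le]; exact ht)
        (by rw [Set.uIcc_of_le hT.le]; exact ⟨hT.le, le_refl T⟩))
    have hadd := intervalIntegral.integral_add_adjacent_intervals hint1 hint2
    have hnn : 0 ≤ ∫ s in t..T, m s :=
      intervalIntegral.integral_nonneg ht.2 fun u hu => hm_nonneg u ⟨ht.1.trans hu.1, hu.2⟩
    linarith
  exact ⟨main, fun h => ⟨by linarith, main⟩⟩
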